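/- arXiv:2403.18834 — 2 statements merged into one kernel-verified Lean document; each statement's English description precedes it below -/
import Mathlib

section
/- If C is an abelian category and F : C → C is an additive functor preserving cokernels, then the category L_F(C) of F-cochain complexes is an abelian category. -/
open CategoryTheory CategoryTheory.Limits

universe v u

variable {C : Type u} [Category.{v} C] [Preadditive C]

/-- A cochain complex over an endofunctor `F`: objects `M n` together with
differentials `d n : F (M n) ⟶ M (n+1)` satisfying `F (d n) ≫ d (n+1) = 0`. -/
structure FComplex (C : Type u) [Category.{v} C] [Preadditive C] (F : C ⥤ C) where
  X : ℤ → C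
  d : ∀ n : ℤ, F.obj (X n) ⟶ X (n + 1)
  d_comp : ∀ n : ℤ, F.map (d n) ≫ d (n + 1) = 0

namespace FComplex

variable {F : C ⥤ C}

/-- Morphisms of `F`-cochain complexes. -/
@[ext]
structure Hom (M N : FComplex C F) where
  f : ∀ n : ℤ, M.X n ⟶ N.X n
  comm : ∀ n : ℤ, F.map (f n) ≫ N.d n = M.d n ≫ f (n + 1)

instance : Category (FComplex C F) where
  Hom := Hom
  id M := ⟨fun n => 𝟙 (M.X n), fun n => by simp⟩
  comp φ ψ := ⟨fun n => φ.f n ≫ ψ.f n, fun n => by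
    have h := φ.comm n
    rw [F.map_comp, Category.assoc, ψ.comm, ← Category.assoc, h, Category.assoc]⟩
  id_comp φ := Hom.ext (funext fun n => Category.id_comp (φ.f n))
  comp_id φ := Hom.ext (funext fun n => Category.comp_id (φ.f n))
  assoc φ ψ χ := Hom.ext (funext fun n => Category.assoc (φ.f n) (ψ.f n) (χ.f n))

@[simp] theorem comp_f {M N P : FComplex C F} (φ : M ⟶ N) (ψ : N ⟶ P) (n : ℤ) :
    (φ ≫ ψ).f n = φ.f n ≫ ψ.f n := rfl

@[simp] theorem id_f (M : FComplex C F) (n : ℤ) : (𝟙 M : M ⟶ M).f n = 𝟙 (M.X n) := rfl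

end FComplex

noncomputable section Aux

namespace FComplexAux

open FComplex ZeroObject

theorem hom_ext {C : Type u} [Category.{v} C] [Preadditive C] {F : C ⥤ C}
    {M N : FComplex C F} {φ ψ : M ⟶ N} (h : ∀ n, φ.f n = ψ.f n) : φ = ψ :=
  FComplex.Hom.ext (funext h)

section Additive

variable {C : Type u} [Category.{v} C] [Preadditive C] {F : C ⥤ C} [F.Additive]

instance instZero {M N : FComplex C F} : Zero (M ⟶ N) :=
  ⟨⟨fun _ => 0, fun n => by simp⟩⟩

@[simp] theorem zero_f {M N : FComplex C F} (n : ℤ) : (0 : M ⟶ N).f n = 0 := rfl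

instance instAdd {M N : FComplex C F} : Add (M ⟶ N) :=
  ⟨fun φ ψ => ⟨fun n => φ.f n + ψ.f n, fun n => by
    simp only [Functor.map_add, Preadditive.add_comp, Preadditive.comp_add, φ.comm n, ψ.comm n]⟩⟩

@[simp] theorem add_f {M N : FComplex C F} (φ ψ : M ⟶ N) (n : ℤ) :
    (φ + ψ).f n = φ.f n + ψ.f n := rfl

instance instNeg {M N : FComplex C F} : Neg (M ⟶ N) :=
  ⟨fun φ => ⟨fun n => -(φ.f n), fun n => by
    simp only [Functor.map_neg, Preadditive.neg_comp, Preadditive.comp_neg, φ.comm n]⟩⟩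

@[simp] theorem neg_f {M N : FComplex C F} (φ : M ⟶ N) (n : ℤ) :
    (-φ).f n = -(φ.f n) := rfl

instance instAddCommGroup {M N : FComplex C F} : AddCommGroup (M ⟶ N) where
  add_assoc a b c := hom_ext fun n => add_assoc _ _ _
  zero_add a := hom_ext fun n => zero_add _
  add_zero a := hom_ext fun n => add_zero _
  add_comm a b := hom_ext fun n => add_comm _ _
  neg_add_cancel a := hom_ext fun n => neg_add_cancel _
  nsmul := nsmulRec
  zsmul := zsmulRec

instance instPreadditive : Preadditive (FComplex C F) where
  add_comp _ _ _ f f' g := hom_ext fun n => by simp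
  comp_add _ _ _ f g g' := hom_ext fun n => by simp

/-- Evaluation at degree `n`. -/
@[simps, reducible] def ev (F : C ⥤ C) [F.Additive] (n : ℤ) : FComplex C F ⥤ C where
  obj M := M.X n
  map φ := φ.f n

instance (n : ℤ) : (ev F n).Additive where
  map_add := rfl

/-- A morphism all of whose components are isomorphisms is an isomorphism. -/
theorem isIso_of_components {M N : FComplex C F} (φ : M ⟶ N) (h : ∀ n, IsIso (φ.f n)) :
    IsIso φ := by
  refine ⟨⟨⟨fun n => inv (φ.f n), fun n => ?_⟩, hom_ext fun n => by simp, hom_ext fun n => by simp⟩⟩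
  haveI := h (n + 1)
  rw [← cancel_mono (φ.f (n + 1)), Category.assoc, Category.assoc, IsIso.inv_hom_id,
    Category.comp_id, ← φ.comm n, ← Category.assoc, ← F.map_comp, IsIso.inv_hom_id, F.map_id,
    Category.id_comp]

end Additive

section AbelianBase

variable {C : Type u} [Category.{v} C] [Abelian C] {F : C ⥤ C} [F.Additive]

instance : HasZeroObject (FComplex C F) :=
  ⟨⟨{ X := fun _ => 0, d := fun _ => 0, d_comp := fun _ => by simp },
    by
      rw [IsZero.iff_id_eq_zero]
      exact hom_ext fun n => (isZero_zero C).eq_of_src _ _⟩⟩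

/-- Binary product complex. -/
def prodC (M N : FComplex C F) : FComplex C F where
  X n := M.X n ⊞ N.X n
  d n := biprod.lift (F.map biprod.fst ≫ M.d n) (F.map biprod.snd ≫ N.d n)
  d_comp n := by
    apply biprod.hom_ext
    · rw [Category.assoc, biprod.lift_fst, zero_comp, ← F.map_comp_assoc, biprod.lift_fst,
        F.map_comp, Category.assoc, M.d_comp, comp_zero]
    · rw [Category.assoc, biprod.lift_snd, zero_comp, ← F.map_comp_assoc, biprod.lift_snd,
        F.map_comp, Category.assoc, N.d_comp, comp_zero]

/-- First projection. -/
def prodFst (M N : FComplex C F) : prodC M N ⟶ M :=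
  ⟨fun _ => biprod.fst, fun n => (biprod.lift_fst _ _).symm⟩

/-- Second projection. -/
def prodSnd (M N : FComplex C F) : prodC M N ⟶ N :=
  ⟨fun _ => biprod.snd, fun n => (biprod.lift_snd _ _).symm⟩

/-- Lift into the product. -/
def prodLift {P M N : FComplex C F} (φ : P ⟶ M) (ψ : P ⟶ N) : P ⟶ prodC M N :=
  ⟨fun n => biprod.lift (φ.f n) (ψ.f n), fun n => by
    dsimp only [prodC]
    apply biprod.hom_ext
    · simp only [Category.assoc, biprod.lift_fst]
      rw [← F.map_comp_assoc, biprod.lift_fst, φ.comm n]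
    · simp only [Category.assoc, biprod.lift_snd]
      rw [← F.map_comp_assoc, biprod.lift_snd, ψ.comm n]⟩

/-- The binary fan on `prodC` is a limit. -/
def prodIsLimit (M N : FComplex C F) :
    IsLimit (BinaryFan.mk (prodFst M N) (prodSnd M N)) :=
  BinaryFan.isLimitMk (fun s => prodLift s.fst s.snd)
    (fun s => hom_ext fun n => biprod.lift_fst _ _)
    (fun s => hom_ext fun n => biprod.lift_snd _ _)
    (fun s m h1 h2 => hom_ext fun n => by
      have e1 := congrArg (fun ψ => FComplex.Hom.f ψ n) h1
      have e2 := congrArg (fun ψ => FComplex.Hom.f ψ n) h2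
      dsimp only [comp_f, prodFst, prodSnd] at e1 e2
      dsimp only [prodLift]
      apply biprod.hom_ext
      · rw [biprod.lift_fst]; exact e1
      · rw [biprod.lift_snd]; exact e2)

instance : HasBinaryProducts (FComplex C F) := by
  haveI : ∀ (M N : FComplex C F), HasLimit (pair M N) := fun M N =>
    HasLimit.mk ⟨_, prodIsLimit M N⟩
  exact hasBinaryProducts_of_hasLimit_pair _

instance : HasFiniteProducts (FComplex C F) :=
  hasFiniteProducts_of_has_binary_and_terminal

/-- Kernel complex of `φ`. -/
@[reducible] def kerC {M N : FComplex C F} (φ : M ⟶ N) : FComplex C F where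
  X n := kernel (φ.f n)
  d n := kernel.lift (φ.f (n + 1)) (F.map (kernel.ι (φ.f n)) ≫ M.d n) (by
    rw [Category.assoc, ← φ.comm n, ← Category.assoc, ← F.map_comp, kernel.condition,
      F.map_zero, zero_comp])
  d_comp n := by
    rw [← cancel_mono (kernel.ι (φ.f (n + 1 + 1))), Category.assoc, kernel.lift_ι,
      zero_comp (f := kernel.ι (φ.f (n + 1 + 1))), ← F.map_comp_assoc, kernel.lift_ι, F.map_comp, Category.assoc,
      M.d_comp, comp_zero]

/-- The inclusion of the kernel complex. -/
def kerι {M N : FComplex C F} (φ : M ⟶ N) : kerC φ ⟶ M :=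
  ⟨fun n => kernel.ι (φ.f n), fun n => (kernel.lift_ι _ _ _).symm⟩

theorem kerι_comp {M N : FComplex C F} (φ : M ⟶ N) : kerι φ ≫ φ = 0 := by
  exact hom_ext fun n => kernel.condition (φ.f n)

/-- The kernel fork. -/
def kerFork {M N : FComplex C F} (φ : M ⟶ N) : KernelFork φ :=
  KernelFork.ofι (kerι φ) (kerι_comp φ)

/-- Lift into the kernel complex. -/
def kerLift {M N P : FComplex C F} (φ : M ⟶ N) (u : P ⟶ M) (hu : u ≫ φ = 0) : P ⟶ kerC φ :=
  ⟨fun n => kernel.lift (φ.f n) (u.f n) (by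
      have := congrArg (fun ψ => FComplex.Hom.f ψ n) hu
      simpa using this),
   fun n => by
    apply (cancel_mono (kernel.ι (φ.f (n + 1)))).1
    simp only [Category.assoc]
    rw [show (kerC φ).d n ≫ kernel.ι (φ.f (n + 1)) = F.map (kernel.ι (φ.f n)) ≫ M.d n from
        kernel.lift_ι _ _ _, ← F.map_comp_assoc, kernel.lift_ι, u.comm n, kernel.lift_ι]⟩

/-- The kernel fork is a limit. -/
def kerForkIsLimit {M N : FComplex C F} (φ : M ⟶ N) : IsLimit (kerFork φ) :=
  KernelFork.IsLimit.ofι (kerι φ) (kerι_comp φ) (fun {P} u hu => kerLift φ u hu)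
    (fun {P} u hu => hom_ext fun n => kernel.lift_ι _ _ _)
    (fun {P} u hu m hm => hom_ext fun n => by
      apply (cancel_mono (kernel.ι (φ.f n))).1
      show _ = kernel.lift _ _ _ ≫ _
      rw [kernel.lift_ι]
      exact congrArg (fun ψ => FComplex.Hom.f ψ n) hm)

instance : HasKernels (FComplex C F) :=
  ⟨fun φ => HasLimit.mk ⟨_, kerForkIsLimit φ⟩⟩

/-- `ev n` preserves kernels. -/
def evPreservesKernel (n : ℤ) {M N : FComplex C F} (φ : M ⟶ N) :
    PreservesLimit (parallelPair φ 0) (ev F n) :=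
  preservesLimit_of_preserves_limit_cone (kerForkIsLimit φ)
    (((kerFork φ).isLimitMapConeEquiv (ev F n)).symm (kernelIsKernel (φ.f n)))

end AbelianBase

section Cokernels

variable {C : Type u} [Category.{v} C] [Abelian C] {F : C ⥤ C} [F.Additive]
variable (hF : ∀ {X Y : C} (f : X ⟶ Y), PreservesColimit (parallelPair f 0) F)

/-- The canonical iso `F (cokernel f) ≅ cokernel (F f)`. -/
def cokIso {X Y : C} (f : X ⟶ Y) : F.obj (cokernel f) ≅ cokernel (F.map f) :=
  letI := hF f
  PreservesCokernel.iso F f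

theorem π_cokIso_hom {X Y : C} (f : X ⟶ Y) :
    F.map (cokernel.π f) ≫ (cokIso hF f).hom = cokernel.π (F.map f) := by
  letI := hF f
  rw [← cancel_mono (cokIso hF f).inv, Category.assoc, Iso.hom_inv_id, Category.comp_id]
  show _ = _ ≫ (PreservesCokernel.iso F f).inv
  rw [PreservesCokernel.iso_inv, π_comp_cokernelComparison]

include hF in
theorem epi_map_π {X Y : C} (f : X ⟶ Y) : Epi (F.map (cokernel.π f)) := by
  have h : F.map (cokernel.π f) = cokernel.π (F.map f) ≫ (cokIso hF f).inv := by
    rw [← π_cokIso_hom hF f, Category.assoc, Iso.hom_inv_id, Category.comp_id]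
  rw [h]
  exact epi_comp _ _

include hF in
theorem epi_map {X Y : C} (e : X ⟶ Y) [Epi e] : Epi (F.map e) := by
  letI := hF (kernel.ι e)
  exact epi_of_isColimit_cofork
    (CokernelCofork.mapIsColimit _ (Abelian.epiIsCokernelOfKernel _ (kernelIsKernel e)) F)

/-- The differential of the cokernel complex. -/
def cokD {M N : FComplex C F} (φ : M ⟶ N) (n : ℤ) :
    F.obj (cokernel (φ.f n)) ⟶ cokernel (φ.f (n + 1)) :=
  (cokIso hF (φ.f n)).hom ≫
    cokernel.desc (F.map (φ.f n)) (N.d n ≫ cokernel.π (φ.f (n + 1))) (by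
      rw [← Category.assoc, φ.comm n, Category.assoc, cokernel.condition, comp_zero])

theorem π_cokD {M N : FComplex C F} (φ : M ⟶ N) (n : ℤ) :
    F.map (cokernel.π (φ.f n)) ≫ cokD hF φ n = N.d n ≫ cokernel.π (φ.f (n + 1)) := by
  rw [cokD, ← Category.assoc, π_cokIso_hom hF (φ.f n), cokernel.π_desc]

/-- Cokernel complex of `φ`. -/
@[reducible] def cokC {M N : FComplex C F} (φ : M ⟶ N) : FComplex C F where
  X n := cokernel (φ.f n)
  d n := cokD hF φ n
  d_comp n := by
    haveI := epi_map_π hF (φ.f n)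
    haveI : Epi (F.map (F.map (cokernel.π (φ.f n)))) := epi_map hF _
    rw [← cancel_epi (F.map (F.map (cokernel.π (φ.f n)))), comp_zero, ← F.map_comp_assoc,
      π_cokD hF φ n, F.map_comp, Category.assoc, π_cokD hF φ (n + 1), ← Category.assoc,
      N.d_comp, zero_comp]

theorem π_cokC_d {M N : FComplex C F} (φ : M ⟶ N) (n : ℤ) :
    F.map (cokernel.π (φ.f n)) ≫ (cokC hF φ).d n = N.d n ≫ cokernel.π (φ.f (n + 1)) :=
  π_cokD hF φ n

/-- Projection onto the cokernel complex. -/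
def cokπ {M N : FComplex C F} (φ : M ⟶ N) : N ⟶ cokC hF φ :=
  ⟨fun n => cokernel.π (φ.f n), fun n => π_cokD hF φ n⟩

theorem comp_cokπ {M N : FComplex C F} (φ : M ⟶ N) : φ ≫ cokπ hF φ = 0 := by
  exact hom_ext fun n => cokernel.condition (φ.f n)

/-- The cokernel cofork. -/
def cokCofork {M N : FComplex C F} (φ : M ⟶ N) : CokernelCofork φ :=
  CokernelCofork.ofπ (cokπ hF φ) (comp_cokπ hF φ)

/-- Descend from the cokernel complex. -/
def cokDesc {M N P : FComplex C F} (φ : M ⟶ N) (u : N ⟶ P) (hu : φ ≫ u = 0) : cokC hF φ ⟶ P :=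
  ⟨fun n => cokernel.desc (φ.f n) (u.f n) (by
      have := congrArg (fun ψ => FComplex.Hom.f ψ n) hu
      simpa using this),
   fun n => by
    haveI := epi_map_π hF (φ.f n)
    apply (cancel_epi (F.map (cokernel.π (φ.f n)))).1
    rw [← Category.assoc, ← F.map_comp,
      cokernel.π_desc, u.comm n, ← Category.assoc, π_cokC_d hF φ n, Category.assoc,
      cokernel.π_desc]⟩

/-- The cokernel cofork is a colimit. -/
def cokCoforkIsColimit {M N : FComplex C F} (φ : M ⟶ N) : IsColimit (cokCofork hF φ) :=
  CokernelCofork.IsColimit.ofπ (cokπ hF φ) (comp_cokπ hF φ) (fun {P} u hu => cokDesc hF φ u hu)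
    (fun {P} u hu => hom_ext fun n => cokernel.π_desc _ _ _)
    (fun {P} u hu m hm => hom_ext fun n => by
      apply (cancel_epi (cokernel.π (φ.f n))).1
      show _ = _ ≫ cokernel.desc _ _ _
      rw [cokernel.π_desc]
      exact congrArg (fun ψ => FComplex.Hom.f ψ n) hm)

include hF in
theorem hasCokernels : HasCokernels (FComplex C F) :=
  ⟨fun φ => HasColimit.mk ⟨_, cokCoforkIsColimit hF φ⟩⟩

/-- `ev n` preserves cokernels. -/
def evPreservesCokernel (n : ℤ) {M N : FComplex C F} (φ : M ⟶ N) :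
    PreservesColimit (parallelPair φ 0) (ev F n) :=
  preservesColimit_of_preserves_colimit_cocone (cokCoforkIsColimit hF φ)
    (((cokCofork hF φ).isColimitMapCoconeEquiv (ev F n)).symm (cokernelIsCokernel (φ.f n)))

end Cokernels

section Comparison

variable {C : Type u} [Category.{v} C] [Abelian C] {F : C ⥤ C} [F.Additive]
variable (hF : ∀ {X Y : C} (f : X ⟶ Y), PreservesColimit (parallelPair f 0) F)
variable [HasKernels (FComplex C F)] [HasCokernels (FComplex C F)]
variable {M N : FComplex C F} (φ : M ⟶ N) (n : ℤ)

/-- The abelian coimage is computed degreewise. -/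
def coimageObjIso : (Abelian.coimage φ).X n ≅ Abelian.coimage (φ.f n) :=
  haveI := evPreservesCokernel hF n (kernel.ι φ)
  haveI := evPreservesKernel n φ
  PreservesCokernel.iso (ev F n) (kernel.ι φ) ≪≫
    cokernel.mapIso _ _ (PreservesKernel.iso (ev F n) φ) (Iso.refl _) (by
      dsimp
      simp only [Category.comp_id, PreservesKernel.iso_hom]
      exact (kernelComparison_comp_ι φ (ev F n)).symm)

/-- The abelian image is computed degreewise. -/
def imageObjIso : (Abelian.image φ).X n ≅ Abelian.image (φ.f n) :=
  haveI := evPreservesKernel n (cokernel.π φ)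
  haveI := evPreservesCokernel hF n φ
  PreservesKernel.iso (ev F n) (cokernel.π φ) ≪≫
    kernel.mapIso _ _ (Iso.refl _) (PreservesCokernel.iso (ev F n) φ) (by
      haveI := evPreservesCokernel hF n φ
      apply (cancel_mono (PreservesCokernel.iso (ev F n) φ).inv).1
      erw [Category.assoc, Iso.hom_inv_id, Category.comp_id, Category.id_comp, PreservesCokernel.iso_inv]
      exact (π_comp_cokernelComparison φ (ev F n)).symm)

theorem coimageImageComparison_f :
    Abelian.coimageImageComparison (φ.f n) =
      (coimageObjIso hF φ n).inv ≫ (Abelian.coimageImageComparison φ).f n ≫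
        (imageObjIso hF φ n).hom := by
  haveI := evPreservesCokernel hF n (kernel.ι φ)
  haveI := evPreservesKernel n φ
  haveI := evPreservesKernel n (cokernel.π φ)
  haveI := evPreservesCokernel hF n φ
  ext
  dsimp
  dsimp [imageObjIso, coimageObjIso, cokernel.map, cokernel.mapIso, kernel.mapIso, kernel.map]
  simp only [Abelian.coimage_image_factorisation, PreservesKernel.iso_hom, Category.assoc,
    kernel.lift_ι, Category.comp_id, PreservesCokernel.iso_inv,
    cokernel.π_desc_assoc, Category.id_comp]
  erw [kernelComparison_comp_ι _ (ev F n),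
    π_comp_cokernelComparison_assoc _ (ev F n)]
  conv_lhs => rw [← Abelian.coimage_image_factorisation φ]
  rfl

theorem coimageImageComparison_f' :
    (Abelian.coimageImageComparison φ).f n =
      (coimageObjIso hF φ n).hom ≫ Abelian.coimageImageComparison (φ.f n) ≫
        (imageObjIso hF φ n).inv := by
  simp only [coimageImageComparison_f hF φ n, Iso.hom_inv_id_assoc, Iso.hom_inv_id,
    Category.assoc, Category.comp_id]

include hF in
theorem isIso_comparison : IsIso (Abelian.coimageImageComparison φ) := by
  apply isIso_of_components
  intro n
  rw [coimageImageComparison_f' hF φ n]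
  infer_instance

end Comparison

end FComplexAux

end Aux

/-- If `C` is an abelian category and `F : C ⥤ C` is an additive functor
preserving cokernels, then the category `L_F(C)` of `F`-cochain complexes is abelian. -/
theorem FComplex_abelian {C : Type u} [Category.{v} C] [Abelian C] (F : C ⥤ C) [F.Additive]
    (hF : ∀ {X Y : C} (f : X ⟶ Y), PreservesColimit (parallelPair f 0) F) :
    Nonempty (Abelian (FComplex C F)) := by
  haveI : HasCokernels (FComplex C F) := FComplexAux.hasCokernels hF
  haveI : ∀ {M N : FComplex C F} (φ : M ⟶ N), IsIso (Abelian.coimageImageComparison φ) :=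
    fun φ => FComplexAux.isIso_comparison hF φ
  exact ⟨Abelian.ofCoimageImageComparisonIsIso⟩
end

section
/- Let F, G : C → C be additive endofunctors of an additive category C such that (F, G) is an adjoint pair. Then the categories L_F(C) and R_G(C) are isomorphic: the functor sends (Mⁿ, fₙ : F(Mⁿ) → Mⁿ⁺¹) to (Mⁿ, gₙ : Mⁿ → G(Mⁿ⁺¹)), where gₙ is the adjoint transpose of fₙ, and acts as the identity on underlying degreewise morphisms. -/
open CategoryTheory CategoryTheory.Limits

universe v u

variable {C : Type u} [Category.{v} C] [Preadditive C]

/-- A right cochain complex over an endofunctor `F`: objects `M n` together with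
morphisms `d n : M n ⟶ F (M (n+1))` satisfying `d n ≫ F (d (n+1)) = 0`. -/
structure RComplex (C : Type u) [Category.{v} C] [Preadditive C] (F : C ⥤ C) where
  X : ℤ → C
  d : ∀ n : ℤ, X n ⟶ F.obj (X (n + 1))
  d_comp : ∀ n : ℤ, d n ≫ F.map (d (n + 1)) = 0

namespace RComplex

variable {F : C ⥤ C}

/-- Morphisms of right `F`-cochain complexes. -/
@[ext]
structure Hom (M N : RComplex C F) where
  f : ∀ n : ℤ, M.X n ⟶ N.X n
  comm : ∀ n : ℤ, M.d n ≫ F.map (f (n + 1)) = f n ≫ N.d n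

instance : Category (RComplex C F) where
  Hom := Hom
  id M := ⟨fun n => 𝟙 (M.X n), fun n => by simp⟩
  comp φ ψ := ⟨fun n => φ.f n ≫ ψ.f n, fun n => by
    have h := ψ.comm n
    rw [F.map_comp, ← Category.assoc, φ.comm, Category.assoc, h, ← Category.assoc]⟩
  id_comp φ := Hom.ext (funext fun n => Category.id_comp (φ.f n))
  comp_id φ := Hom.ext (funext fun n => Category.comp_id (φ.f n))
  assoc φ ψ χ := Hom.ext (funext fun n => Category.assoc (φ.f n) (ψ.f n) (χ.f n))

end RComplex

section Aux

variable {F G : C ⥤ C}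

theorem FComplex.eqToHom_f {M N : FComplex C F} (h : M = N) (n : ℤ) :
    (eqToHom h).f n = eqToHom (by rw [h]) := by subst h; rfl

theorem RComplex.comp_f {M N P : RComplex C G} (φ : M ⟶ N) (ψ : N ⟶ P) (n : ℤ) :
    (φ ≫ ψ).f n = φ.f n ≫ ψ.f n := rfl

theorem RComplex.eqToHom_f {M N : RComplex C G} (h : M = N) (n : ℤ) :
    (eqToHom h).f n = eqToHom (by rw [h]) := by subst h; rfl

variable [F.Additive] [G.Additive] (adj : F ⊣ G)

theorem homEquiv_zero_aux {X Y : C} : adj.homEquiv X Y 0 = 0 := by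
  rw [Adjunction.homEquiv_unit, G.map_zero, comp_zero]

theorem homEquiv_symm_zero_aux {X Y : C} : (adj.homEquiv X Y).symm 0 = 0 := by
  rw [Adjunction.homEquiv_counit, F.map_zero, zero_comp]

/-- The forward functor. -/
def EFun : FComplex C F ⥤ RComplex C G where
  obj M :=
    { X := M.X
      d := fun n => adj.homEquiv (M.X n) (M.X (n + 1)) (M.d n)
      d_comp := fun n => by
        rw [← Adjunction.homEquiv_naturality_right, ← Adjunction.homEquiv_naturality_left,
          M.d_comp n, homEquiv_zero_aux adj, homEquiv_zero_aux adj] }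
  map {M N} φ :=
    { f := φ.f
      comm := fun n => by
        dsimp
        rw [← Adjunction.homEquiv_naturality_right, ← φ.comm n,
          Adjunction.homEquiv_naturality_left] }
  map_id M := rfl
  map_comp φ ψ := rfl

/-- The backward functor. -/
def EInv : RComplex C G ⥤ FComplex C F where
  obj M :=
    { X := M.X
      d := fun n => (adj.homEquiv (M.X n) (M.X (n + 1))).symm (M.d n)
      d_comp := fun n => by
        rw [← Adjunction.homEquiv_naturality_left_symm,
          ← Adjunction.homEquiv_naturality_right_symm, M.d_comp n,
          homEquiv_symm_zero_aux adj, homEquiv_symm_zero_aux adj] }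
  map {M N} φ :=
    { f := φ.f
      comm := fun n => by
        dsimp
        rw [← Adjunction.homEquiv_naturality_left_symm, ← φ.comm n,
          Adjunction.homEquiv_naturality_right_symm] }
  map_id M := rfl
  map_comp φ ψ := rfl

end Aux

/-- If `(F, G)` is an adjoint pair of additive endofunctors of an additive
category `C`, then `L_F(C)` and `R_G(C)` are isomorphic categories: the functor sends
`(Mⁿ, fₙ : F(Mⁿ) ⟶ Mⁿ⁺¹)` to `(Mⁿ, gₙ : Mⁿ ⟶ G(Mⁿ⁺¹))`, where `gₙ` is the adjoint
transpose of `fₙ`, and acts as the identity on underlying degreewise morphisms. -/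
theorem FComplex_iso_RComplex_of_adjunction (F G : C ⥤ C) [F.Additive] [G.Additive]
    (adj : F ⊣ G) :
    ∃ (E : FComplex C F ⥤ RComplex C G) (E' : RComplex C G ⥤ FComplex C F),
      (∀ M : FComplex C F, (E.obj M).X = M.X) ∧
      (∀ M : FComplex C F,
        HEq (E.obj M).d (fun n : ℤ => (adj.homEquiv (M.X n) (M.X (n + 1))) (M.d n))) ∧
      (∀ (M N : FComplex C F) (φ : M ⟶ N), HEq (E.map φ).f φ.f) ∧
      E ⋙ E' = 𝟭 (FComplex C F) ∧ E' ⋙ E = 𝟭 (RComplex C G) := by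
  refine ⟨EFun adj, EInv adj, fun M => rfl, fun M => HEq.rfl, fun M N φ => HEq.rfl, ?_, ?_⟩
  · refine CategoryTheory.Functor.ext (fun M => ?_) (fun M N φ => ?_)
    · cases M with
      | mk X d d_comp =>
        simp only [EFun, EInv, Functor.comp_obj]
        congr 1
        funext n
        exact Equiv.symm_apply_apply _ _
    · apply FComplex.Hom.ext
      funext n
      simp [FComplex.eqToHom_f]
      simp [EFun, EInv]; exact (Category.id_comp _).symm
  · refine CategoryTheory.Functor.ext (fun M => ?_) (fun M N φ => ?_)
    · cases M with
      | mk X d d_comp =>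
        simp only [EFun, EInv, Functor.comp_obj]
        congr 1
        funext n
        exact Equiv.apply_symm_apply _ _
    · apply RComplex.Hom.ext
      funext n
      simp [RComplex.eqToHom_f, RComplex.comp_f]
      simp [EFun, EInv]; exact (Category.id_comp _).symm
end
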